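/- Let C be an n×n correlation matrix with mean correlation c > 0 and standard deviation σ. Then the weight w₁ = ⟨v₁,δ_n⟩² of a unit eigenvector v₁ for the largest eigenvalue satisfies w₁ ≥ 1 − ((n−1)/n)·(σ²/c²). -/

import Mathlib

open Finset

/-- Polynomial inequality T ≥ 0 (quadratic in `a := N*c` with nonpositive discriminant
when `x < y`). -/
private lemma lemT (N c x y : ℝ) (hN : 2 ≤ N) (hc : 0 ≤ c) (hx : 0 ≤ x) (hy : 0 ≤ y) :
    N^2*(N-2)*c^2*x ≤
      (x+y)*(N^2*(N-1)*c^2 + 2*N*(N-1)*c*(x-y) + (x-y)^2 + (N-2)*(x^2+y^2)) := by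
  have hN2 : (0:ℝ) ≤ N - 2 := by linarith
  have hN1 : (0:ℝ) ≤ N - 1 := by linarith
  rcases le_or_gt y x with hxy | hxy
  · -- x ≥ y : all contributions are nonnegative
    have p1 : 0 ≤ N*c*(x-y)*(x+y) := by
      have := mul_nonneg (mul_nonneg (mul_nonneg (by linarith : (0:ℝ) ≤ N) hc)
        (sub_nonneg.2 hxy)) (by linarith : (0:ℝ) ≤ x + y)
      linarith [this]
    have p2 : 0 ≤ (x+y)*(x-y)^2 := mul_nonneg (by linarith) (sq_nonneg _)
    have p3 : 0 ≤ (x+y)*(x^2+y^2) := by positivity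
    have p4 : 0 ≤ (N*c)^2*x := by positivity
    have p5 : 0 ≤ (N*c)^2*y := by positivity
    linarith [p4, p2, mul_nonneg hN1 p1, mul_nonneg hN1 p5, mul_nonneg hN2 p3]
  · -- y > x : quadratic in a := N*c with nonpositive discriminant
    rcases eq_or_lt_of_le (by positivity : (0:ℝ) ≤ x + (N-1)*y) with hA | hA
    · -- x + (N-1)y = 0 forces x = y = 0, contradiction with y > x ≥ 0
      have h1y : 1*y ≤ (N-1)*y := mul_le_mul_of_nonneg_right (by linarith) hy
      have hy0 : y = 0 := by linarith
      have hx0 : x = 0 := by linarith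
      rw [hx0, hy0]
      linarith
    · have key : 0 ≤ 4*(x + (N-1)*y)*((x+y)*(N^2*(N-1)*c^2 + 2*N*(N-1)*c*(x-y) + (x-y)^2
          + (N-2)*(x^2+y^2)) - N^2*(N-2)*c^2*x) := by
        have h1 : 0 ≤ (2*(x + (N-1)*y)*(N*c) + 2*(N-1)*(x^2-y^2))^2 := sq_nonneg _
        have h2 : 0 ≤ (x+y)*((N-2)*x*((N-1)*(y^2-x^2)+2*N*x*y)) := by
          have e1 : (0:ℝ) ≤ y^2 - x^2 := by nlinarith [hxy, hx, hy]
          have e2 : (0:ℝ) ≤ (N-1)*(y^2-x^2)+2*N*x*y := by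
            have e3 := mul_nonneg (mul_nonneg (by linarith : (0:ℝ) ≤ 2*N) hx) hy
            linarith [mul_nonneg hN1 e1, e3]
          exact mul_nonneg (by linarith)
            (mul_nonneg (mul_nonneg hN2 hx) e2)
        linarith [h1, h2]
      nlinarith [key, hA, mul_pos hA hA]

/-- Main certificate: second eigenvalue below the Rayleigh value μ. -/
private lemma lemA (N c s2 a b s q : ℝ) (hN : 3 ≤ N) (hc : 0 < c) (hs2 : 0 ≤ s2)
    (ha : 1+(N-1)*c ≤ a) (hb0 : 0 ≤ b) (hbmu : b ≤ 1+(N-1)*c)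
    (hs : 0 ≤ s) (hq : 0 ≤ q) (hsum : a + b + s = N)
    (hsq : a^2 + b^2 + q = N + N*(N-1)*(s2+c^2))
    (hcs : s^2 ≤ (N-2)*q) :
    N*c^2*(a - (1+(N-1)*c)) ≤ (N-1)*s2*(a-b) := by
  have hx : 0 ≤ a - (1+(N-1)*c) := by linarith
  have hy : 0 ≤ (1+(N-1)*c) - b := by linarith
  have h0 : (N-a-b)^2 ≤ (N-2)*(N + N*(N-1)*(s2+c^2) - a^2 - b^2) := by
    have hs' : s = N - a - b := by linarith
    have hq' : q = N + N*(N-1)*(s2+c^2) - a^2 - b^2 := by linarith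
    rw [← hs', ← hq']; exact hcs
  have hP : N^2*(N-1)*c^2
      + 2*N*(N-1)*c*((a-(1+(N-1)*c))-((1+(N-1)*c)-b))
      + ((a-(1+(N-1)*c))-((1+(N-1)*c)-b))^2
      + (N-2)*((a-(1+(N-1)*c))^2+((1+(N-1)*c)-b)^2) ≤ N*(N-1)*(N-2)*s2 := by
    linarith [h0]
  have hT := lemT N c (a-(1+(N-1)*c)) ((1+(N-1)*c)-b) (by linarith) hc.le hx hy
  have hsumxy : (0:ℝ) ≤ (a-(1+(N-1)*c)) + ((1+(N-1)*c)-b) := by linarith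
  have hchain := le_trans hT (mul_le_mul_of_nonneg_left hP hsumxy)
  have hK : (0:ℝ) < N*(N-2) := mul_pos (by linarith) (by linarith)
  have hfin : (N*(N-2)) * (N*c^2*(a - (1+(N-1)*c)))
      ≤ (N*(N-2)) * ((N-1)*s2*(a-b)) := by linarith [hchain]
  exact le_of_mul_le_mul_left hfin hK

/-- n = 2 version of the certificate. -/
private lemma lemA2 (c s2 a b : ℝ) (hc : 0 < c) (hs2 : 0 ≤ s2)
    (ha : 1+c ≤ a) (hb0 : 0 ≤ b)
    (hsum : a + b = 2) (hsq : a^2 + b^2 = 2 + 2*(s2+c^2)) :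
    2*c^2*(a - (1+c)) ≤ s2*(a-b) := by
  have hb : b = 2 - a := by linarith
  have ht : c ≤ a - 1 := by linarith
  have hs2' : s2 = (a-1)^2 - c^2 := by nlinarith [hsq, hb]
  rw [hs2', hb]
  nlinarith [mul_nonneg (sub_nonneg.2 ht) (mul_nonneg (by linarith : (0:ℝ) ≤ a-1) hc.le),
    mul_nonneg (sub_nonneg.2 ht) (mul_nonneg (sub_nonneg.2 ht) (by linarith : (0:ℝ) ≤ a-1+c)),
    mul_nonneg (sub_nonneg.2 ht) (mul_pos hc hc).le]

/-- Degenerate case: two eigenvalues ≥ μ forces large σ². -/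
private lemma lemC (N c s2 a b s q : ℝ) (hN : 2 ≤ N) (hc : 0 < c) (hs2 : 0 ≤ s2)
    (ha : 1+(N-1)*c ≤ a) (hb : 1+(N-1)*c ≤ b)
    (hs : 0 ≤ s) (hq : 0 ≤ q) (hsum : a + b + s = N)
    (hsq : a^2 + b^2 + q = N + N*(N-1)*(s2+c^2))
    (hcs : s^2 ≤ (N-2)*q) :
    N*c^2 ≤ (N-1)*s2 := by
  rcases eq_or_lt_of_le hN with h2 | h2
  · -- N = 2 : contradiction, since a + b ≥ 2 + 2c > 2 = N
    exfalso
    rw [← h2] at ha hb hsum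
    norm_num at ha hb
    linarith
  · -- N > 2
    have hp : 0 ≤ a - (1+(N-1)*c) := by linarith
    have hr : 0 ≤ b - (1+(N-1)*c) := by linarith
    have hs' : s = N - a - b := by linarith
    have hq' : q = N + N*(N-1)*(s2+c^2) - a^2 - b^2 := by linarith
    have h0 : (N-a-b)^2 ≤ (N-2)*(N + N*(N-1)*(s2+c^2) - a^2 - b^2) := by
      rw [← hs', ← hq']; exact hcs
    have hkey : N*(2*(N-1)^2*c^2 + N - 2) ≤ (N-2)*(a^2+b^2) + (N-a-b)^2 := by
      linarith [mul_nonneg (by linarith : (0:ℝ) ≤ N-2) (sq_nonneg (a - (1+(N-1)*c))),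
        mul_nonneg (by linarith : (0:ℝ) ≤ N-2) (sq_nonneg (b - (1+(N-1)*c))),
        sq_nonneg (a + b - 2*(1+(N-1)*c)),
        mul_nonneg (mul_nonneg (by nlinarith : (0:ℝ) ≤ N*(N-1)) hc.le)
          (by linarith : (0:ℝ) ≤ (a - (1+(N-1)*c)) + (b - (1+(N-1)*c)))]
    have hfin : (N*(N-1)) * (N*c^2) ≤ (N*(N-1)) * ((N-2)*s2) := by
      linarith [hkey, h0]
    have hdiv := le_of_mul_le_mul_left hfin
      (mul_pos (by linarith : (0:ℝ) < N) (by linarith : (0:ℝ) < N-1))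
    nlinarith [hdiv, hs2]

set_option maxHeartbeats 1600000 in
/-- For a correlation matrix with `c > 0`, `w₁ ≥ 1 − ((n−1)/n)·(σ²/c²)`. -/
theorem stmt_13 (n : ℕ) (hn : 2 ≤ n) (C : Matrix (Fin n) (Fin n) ℝ)
    (hpsd : C.PosSemidef) (hdiag : ∀ i, C i i = 1)
    (c σ : ℝ)
    (hc : c = (2 / ((n : ℝ) * ((n : ℝ) - 1))) *
        ∑ i : Fin n, ∑ j ∈ Finset.univ.filter (fun j => j < i), C i j)
    (hσ : σ ^ 2 = (2 / ((n : ℝ) * ((n : ℝ) - 1))) *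
        (∑ i : Fin n, ∑ j ∈ Finset.univ.filter (fun j => j < i), C i j ^ 2) - c ^ 2)
    (hcpos : 0 < c)
    (lam1 : ℝ) (v1 : Fin n → ℝ)
    (hv1 : C.mulVec v1 = lam1 • v1) (hv1norm : ∑ i, v1 i ^ 2 = 1)
    (hmax : ∀ (μ : ℝ) (x : Fin n → ℝ), x ≠ 0 → C.mulVec x = μ • x → μ ≤ lam1) :
    (∑ i, v1 i * (Real.sqrt n)⁻¹) ^ 2 ≥ 1 - (((n : ℝ) - 1) / n) * (σ ^ 2 / c ^ 2) := by
  have hH : C.IsHermitian := hpsd.1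
  have hsym : ∀ i j, C i j = C j i := fun i j => by
    simpa using hH.apply j i
  have hn0 : (0:ℝ) < n := by positivity
  have hn1 : (1:ℝ) ≤ (n:ℝ) - 1 := by
    have : (2:ℝ) ≤ n := by exact_mod_cast hn
    linarith
  -- eigen data
  set u : Fin n → Fin n → ℝ := fun k => ⇑(hH.eigenvectorBasis k) with hu
  set lam : Fin n → ℝ := hH.eigenvalues with hlam
  have hEig : ∀ k, C.mulVec (u k) = lam k • u k := fun k => hH.mulVec_eigenvectorBasis k
  have hEig' : ∀ k i, ∑ m, C i m * u k m = lam k * u k i := by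
    intro k i
    have := congrFun (hEig k) i
    simpa [Matrix.mulVec, dotProduct] using this
  have hnonneg : ∀ k, 0 ≤ lam k := fun k => hpsd.eigenvalues_nonneg k
  -- orthonormality
  have horm : ∀ k l, ∑ i, u k i * u l i = if k = l then 1 else 0 := by
    intro k l
    have h3 := hH.eigenvectorBasis.orthonormal
    rw [orthonormal_iff_ite] at h3
    have := h3 k l
    rw [PiLp.inner_apply] at this
    rw [Finset.sum_congr rfl fun i _ => mul_comm (u k i) (u l i)]
    simpa [hu] using this
  -- completeness
  have hcomp : ∀ i j, ∑ k, u k i * u k j = if i = j then 1 else 0 := by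
    have hUV : (Matrix.of fun k i => u k i) * (Matrix.of fun k i => u k i).transpose = 1 := by
      ext k l
      simpa [Matrix.mul_apply, Matrix.one_apply] using horm k l
    have hVU := mul_eq_one_comm.mp hUV
    intro i j
    have := congrFun (congrFun hVU i) j
    simpa [Matrix.mul_apply, Matrix.one_apply, mul_comm] using this
  -- spectral expansion of entries
  have hentry : ∀ i j, ∑ k, lam k * (u k i * u k j) = C i j := by
    intro i j
    have : ∀ k, lam k * (u k i * u k j) = ∑ m, C i m * (u k m * u k j) := by
      intro k
      have e : (∑ m, C i m * (u k m * u k j)) = (∑ m, C i m * u k m) * u k j := by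
        rw [Finset.sum_mul]
        exact Finset.sum_congr rfl fun m _ => by ring
      rw [e, hEig' k i]
      ring
    rw [Finset.sum_congr rfl (fun k _ => this k), Finset.sum_comm]
    have : ∀ m, ∑ k, C i m * (u k m * u k j) = C i m * (if m = j then 1 else 0) := by
      intro m
      rw [← Finset.mul_sum, hcomp m j]
    rw [Finset.sum_congr rfl (fun m _ => this m)]
    simp
  -- second moment of entries
  have hentry2 : ∀ i, ∑ k, lam k ^ 2 * (u k i * u k i) = ∑ m, C i m ^ 2 := by
    intro i
    have key : ∀ k, lam k ^ 2 * (u k i * u k i) = ∑ m, C i m * (lam k * (u k m * u k i)) := by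
      intro k
      have : ∀ m, C i m * (lam k * (u k m * u k i)) = (C i m * u k m) * (lam k * u k i) := by
        intro m; ring
      rw [Finset.sum_congr rfl (fun m _ => this m), ← Finset.sum_mul, hEig' k i]
      ring
    rw [Finset.sum_congr rfl (fun k _ => key k), Finset.sum_comm]
    have : ∀ m, ∑ k, C i m * (lam k * (u k m * u k i)) = C i m * C m i := by
      intro m
      rw [← Finset.mul_sum, hentry m i]
    rw [Finset.sum_congr rfl (fun m _ => this m)]
    exact Finset.sum_congr rfl fun m _ => by rw [hsym i m]; ring
  -- basic sums over all entries
  have pair_swap : ∀ f : Fin n → Fin n → ℝ, (∀ i j, f i j = f j i) →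
      (∑ i, ∑ j ∈ univ.filter (fun j => i < j), f i j)
        = ∑ i, ∑ j ∈ univ.filter (fun j => j < i), f i j := by
    intro f hf
    have e1 : (∑ i, ∑ j ∈ univ.filter (fun j => i < j), f i j)
        = ∑ i, ∑ j, if i < j then f i j else 0 :=
      Finset.sum_congr rfl fun i _ => Finset.sum_filter _ _
    have e2 : (∑ i : Fin n, ∑ j, if i < j then f i j else 0)
        = ∑ j : Fin n, ∑ i, if i < j then f i j else 0 := Finset.sum_comm
    rw [e1, e2]
    refine Finset.sum_congr rfl fun i _ => ?_
    rw [Finset.sum_filter]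
    refine Finset.sum_congr rfl fun j _ => ?_
    by_cases h : j < i
    · rw [if_pos h, if_pos h, hf j i]
    · rw [if_neg h, if_neg h]
  have row_split : ∀ f : Fin n → Fin n → ℝ, ∀ i,
      (∑ j, f i j) = (∑ j ∈ univ.filter (fun j => j < i), f i j) + f i i
        + ∑ j ∈ univ.filter (fun j => i < j), f i j := by
    intro f i
    have key : ∀ j, f i j = (if j < i then f i j else 0)
        + ((if j = i then f i j else 0) + (if i < j then f i j else 0)) := by
      intro j
      by_cases h1 : j < i
      · rw [if_pos h1, if_neg h1.ne, if_neg (asymm h1)]; ring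
      · by_cases h2 : j = i
        · rw [if_neg h1, if_pos h2, if_neg (by subst h2; exact lt_irrefl j)]; ring
        · have h3 : i < j := lt_of_le_of_ne (not_lt.mp h1) (Ne.symm h2)
          rw [if_neg h1, if_neg h2, if_pos h3]; ring
    calc (∑ j, f i j)
        = ∑ j, ((if j < i then f i j else 0)
            + ((if j = i then f i j else 0) + (if i < j then f i j else 0))) :=
          Finset.sum_congr rfl fun j _ => key j
      _ = (∑ j, if j < i then f i j else 0)
          + ((∑ j, if j = i then f i j else 0) + (∑ j, if i < j then f i j else 0)) := by
          rw [Finset.sum_add_distrib, Finset.sum_add_distrib]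
      _ = (∑ j ∈ univ.filter (fun j => j < i), f i j) + f i i
          + ∑ j ∈ univ.filter (fun j => i < j), f i j := by
          have m1 : (∑ j, if j < i then f i j else 0)
              = ∑ j ∈ univ.filter (fun j => j < i), f i j := (Finset.sum_filter _ _).symm
          have m2 : (∑ j, if i < j then f i j else 0)
              = ∑ j ∈ univ.filter (fun j => i < j), f i j := (Finset.sum_filter _ _).symm
          have m3 : (∑ j, if j = i then f i j else 0) = f i i := by simp
          rw [m1, m2, m3]
          ring
  have hdouble : ∀ f : Fin n → Fin n → ℝ, (∀ i j, f i j = f j i) →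
      (∑ i, ∑ j, f i j) = (∑ i, f i i) + 2 * ∑ i, ∑ j ∈ univ.filter (fun j => j < i), f i j := by
    intro f hf
    have := pair_swap f hf
    calc ∑ i, ∑ j, f i j
        = ∑ i, ((∑ j ∈ univ.filter (fun j => j < i), f i j) + f i i
            + ∑ j ∈ univ.filter (fun j => i < j), f i j) :=
          Finset.sum_congr rfl fun i _ => row_split f i
      _ = (∑ i, f i i) + 2 * ∑ i, ∑ j ∈ univ.filter (fun j => j < i), f i j := by
          rw [Finset.sum_add_distrib, Finset.sum_add_distrib, this]; ring
  -- total sums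
  have hCsum : (∑ i, ∑ j, C i j) = n * (1 + ((n:ℝ)-1)*c) := by
    rw [hdouble C hsym]
    have h1 : (∑ i, C i i) = (n:ℝ) := by simp [hdiag]
    have h2 : (2:ℝ) * ∑ i, ∑ j ∈ univ.filter (fun j => j < i), C i j = n * ((n:ℝ)-1) * c := by
      have hne : (n:ℝ) * ((n:ℝ)-1) ≠ 0 := ne_of_gt (mul_pos hn0 (by linarith))
      rw [hc]
      field_simp
    rw [h1]; linarith [h2]
  have hCsqsum : (∑ i, ∑ j, C i j ^ 2) = n + n * ((n:ℝ)-1) * (σ^2 + c^2) := by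
    have hd2 := hdouble (fun i j => C i j ^ 2) (fun i j => by show C i j ^ 2 = C j i ^ 2; rw [hsym i j])
    rw [hd2]
    have h1 : (∑ i, C i i ^ 2) = (n:ℝ) := by simp [hdiag]
    have h2 : (2:ℝ) * ∑ i, ∑ j ∈ univ.filter (fun j => j < i), C i j ^ 2
        = n * ((n:ℝ)-1) * (σ^2 + c^2) := by
      have hne : (n:ℝ) * ((n:ℝ)-1) ≠ 0 := ne_of_gt (mul_pos hn0 (by linarith))
      have e : σ^2 + c^2
          = 2/((n:ℝ)*((n:ℝ)-1)) * ∑ i, ∑ j ∈ univ.filter (fun j => j < i), C i j ^ 2 := by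
        linarith [hσ]
      rw [e]
      field_simp
    rw [h1]; linarith [h2]
  -- eigen sums
  have htr : (∑ k, lam k) = (n:ℝ) := by
    have : ∀ k, lam k = ∑ i, lam k * (u k i * u k i) := by
      intro k
      rw [← Finset.mul_sum, horm k k]
      simp
    rw [Finset.sum_congr rfl (fun k _ => this k), Finset.sum_comm]
    have : ∀ i, ∑ k, lam k * (u k i * u k i) = C i i := fun i => hentry i i
    rw [Finset.sum_congr rfl (fun i _ => this i)]
    simp [hdiag]
  have hfrob : (∑ k, lam k ^ 2) = n + n * ((n:ℝ)-1) * (σ^2 + c^2) := by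
    have : ∀ k, lam k ^ 2 = ∑ i, lam k ^ 2 * (u k i * u k i) := by
      intro k
      rw [← Finset.mul_sum, horm k k]
      simp
    rw [Finset.sum_congr rfl (fun k _ => this k), Finset.sum_comm,
      Finset.sum_congr rfl (fun i _ => hentry2 i), ← hCsqsum]
  -- coefficients of the all-ones vector and of v1
  set B : Fin n → ℝ := fun k => ∑ i, u k i with hB
  set G : Fin n → ℝ := fun k => ∑ i, v1 i * u k i with hG
  have parseval : ∀ x y : Fin n → ℝ,
      (∑ k, (∑ i, x i * u k i) * (∑ j, y j * u k j)) = ∑ i, x i * y i := by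
    intro x y
    have : ∀ k, (∑ i, x i * u k i) * (∑ j, y j * u k j)
        = ∑ i, ∑ j, (x i * y j) * (u k i * u k j) := by
      intro k
      rw [Finset.sum_mul_sum]
      exact Finset.sum_congr rfl fun i _ => Finset.sum_congr rfl fun j _ => by ring
    rw [Finset.sum_congr rfl (fun k _ => this k), Finset.sum_comm]
    have : ∀ i, (∑ k, ∑ j, (x i * y j) * (u k i * u k j)) = x i * y i := by
      intro i
      rw [Finset.sum_comm]
      have : ∀ j, ∑ k, (x i * y j) * (u k i * u k j) = (x i * y j) * (if i = j then 1 else 0) := by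
        intro j
        rw [← Finset.mul_sum, hcomp i j]
      rw [Finset.sum_congr rfl (fun j _ => this j)]
      simp
    rw [Finset.sum_congr rfl (fun i _ => this i)]
  have hBsq : (∑ k, B k ^ 2) = (n:ℝ) := by
    have := parseval (fun _ => (1:ℝ)) (fun _ => (1:ℝ))
    simp only [one_mul] at this
    simp only [hB, sq]
    rw [this]
    simp
  have hGsq : (∑ k, G k ^ 2) = 1 := by
    have := parseval v1 v1
    simp only [hG, sq]
    rw [this, ← hv1norm]
    exact Finset.sum_congr rfl fun i _ => (sq (v1 i)).symm
  have hGB : (∑ k, G k * B k) = ∑ i, v1 i := by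
    have := parseval v1 (fun _ => (1:ℝ))
    simp only [one_mul, mul_one] at this
    simpa [hG, hB] using this
  have hmu : (∑ k, lam k * B k ^ 2) = n * (1 + ((n:ℝ)-1)*c) := by
    have h1 : ∀ k, lam k * B k ^ 2 = ∑ i, ∑ j, lam k * (u k i * u k j) := by
      intro k
      simp only [hB, sq]
      rw [Finset.sum_mul_sum, Finset.mul_sum]
      exact Finset.sum_congr rfl fun i _ => by rw [Finset.mul_sum]
    rw [Finset.sum_congr rfl (fun k _ => h1 k), Finset.sum_comm, ← hCsum]
    refine Finset.sum_congr rfl fun i _ => ?_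
    rw [Finset.sum_comm]
    exact Finset.sum_congr rfl fun j _ => hentry i j
  -- eigen-equation for v1's coefficients
  have hGeig : ∀ k, (lam1 - lam k) * G k = 0 := by
    intro k
    have h1 : lam k * G k = ∑ i, v1 i * (lam k * u k i) := by
      rw [hG, Finset.mul_sum]
      exact Finset.sum_congr rfl fun i _ => by ring
    have h2 : ∀ i, v1 i * (lam k * u k i) = ∑ m, (C i m * u k m) * v1 i := by
      intro i
      rw [← hEig' k i, Finset.mul_sum]
      exact Finset.sum_congr rfl fun m _ => by ring
    have h3 : lam k * G k = ∑ m, u k m * (lam1 * v1 m) := by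
      rw [h1, Finset.sum_congr rfl (fun i _ => h2 i), Finset.sum_comm]
      refine Finset.sum_congr rfl fun m _ => ?_
      have h4 : ∑ i, C i m * u k m * v1 i = u k m * ∑ i, C m i * v1 i := by
        rw [Finset.mul_sum]
        exact Finset.sum_congr rfl fun i _ => by rw [hsym i m]; ring
      rw [h4]
      have h5 : (∑ i, C m i * v1 i) = lam1 * v1 m := by
        have := congrFun hv1 m
        simpa [Matrix.mulVec, dotProduct] using this
      rw [h5]
    have h6 : lam k * G k = lam1 * G k := by
      rw [h3, hG, Finset.mul_sum]
      exact Finset.sum_congr rfl fun m _ => by ring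
    linarith [h6]
  -- lam k ≤ lam1
  have hle : ∀ k, lam k ≤ lam1 := by
    intro k
    refine hmax (lam k) (u k) ?_ (hEig k)
    intro h0
    have := horm k k
    simp only [if_pos rfl, h0] at this
    norm_num at this
  -- pick k₀ with G k₀ ≠ 0, then lam k₀ = lam1
  have hex : ∃ k0, G k0 ≠ 0 := by
    by_contra h
    push_neg at h
    have : (∑ k, G k ^ 2) = 0 := by
      refine Finset.sum_eq_zero fun k _ => by rw [h k]; ring
    rw [hGsq] at this
    norm_num at this
  obtain ⟨k0, hk0⟩ := hex
  have hlamk0 : lam k0 = lam1 := by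
    have := hGeig k0
    rcases mul_eq_zero.mp this with h | h
    · linarith
    · exact absurd h hk0
  -- pick k₁ = argmax of lam over univ.erase k0
  have hne : (univ.erase k0).Nonempty := by
    obtain ⟨k1, hk1⟩ := Fintype.exists_ne_of_one_lt_card
      (by rw [Fintype.card_fin]; omega : 1 < Fintype.card (Fin n)) k0
    exact ⟨k1, Finset.mem_erase.mpr ⟨hk1, Finset.mem_univ k1⟩⟩
  obtain ⟨k1, hk1mem, hk1max⟩ := Finset.exists_max_image (univ.erase k0) lam hne
  set lam2 : ℝ := lam k1 with hlam2
  -- sums over the rest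
  set R : Finset (Fin n) := (univ.erase k0).erase k1 with hR
  have hsplit : ∀ f : Fin n → ℝ, (∑ k, f k) = f k0 + f k1 + ∑ k ∈ R, f k := by
    intro f
    rw [← Finset.add_sum_erase _ f (Finset.mem_univ k0), ← Finset.add_sum_erase _ f hk1mem]
    ring
  have hcardR : (R.card : ℝ) = (n:ℝ) - 2 := by
    have h1 : R.card = n - 2 := by
      rw [hR, Finset.card_erase_of_mem hk1mem, Finset.card_erase_of_mem (Finset.mem_univ k0)]
      simp only [Finset.card_univ, Fintype.card_fin]
      omega
    rw [h1, Nat.cast_sub hn]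
    norm_num
  have hsR : (0:ℝ) ≤ ∑ k ∈ R, lam k := Finset.sum_nonneg fun k _ => hnonneg k
  have hqR : (0:ℝ) ≤ ∑ k ∈ R, lam k ^ 2 := Finset.sum_nonneg fun k _ => sq_nonneg _
  have hcsR : (∑ k ∈ R, lam k)^2 ≤ ((n:ℝ)-2) * ∑ k ∈ R, lam k ^ 2 := by
    have h0 : (∑ k ∈ R, lam k)^2 ≤ (R.card : ℝ) * ∑ k ∈ R, lam k ^ 2 :=
      sq_sum_le_card_mul_sum_sq
    rw [hcardR] at h0
    exact h0
  have hsumR : lam1 + lam2 + (∑ k ∈ R, lam k) = (n:ℝ) := by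
    have := hsplit lam
    rw [htr] at this
    rw [← hlamk0]
    linarith
  have hsqR : lam1^2 + lam2^2 + (∑ k ∈ R, lam k ^ 2) = n + n * ((n:ℝ)-1) * (σ^2 + c^2) := by
    have := hsplit (fun k => lam k ^ 2)
    rw [hfrob] at this
    rw [← hlamk0]
    linarith
  -- lam1 ≥ μ
  set mu : ℝ := 1 + ((n:ℝ)-1)*c with hmudef
  have hlam1mu : mu ≤ lam1 := by
    have h1 : (∑ k, lam k * B k ^ 2) ≤ ∑ k, lam1 * B k ^ 2 :=
      Finset.sum_le_sum fun k _ => mul_le_mul_of_nonneg_right (hle k) (sq_nonneg _)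
    rw [hmu] at h1
    have h2 : (∑ k, lam1 * B k ^ 2) = lam1 * n := by rw [← Finset.mul_sum, hBsq]
    rw [h2] at h1
    have h3 : mu * n ≤ lam1 * n := by linarith [h1]
    exact le_of_mul_le_mul_right h3 hn0
  have hs2 : (0:ℝ) ≤ σ^2 := sq_nonneg σ
  -- final goal reduction: suffices c²(n - A²) ≤ (n-1)σ² where A := ∑ v1
  set A : ℝ := ∑ i, v1 i with hA
  have hgoal : c^2 * ((n:ℝ) - A^2) ≤ ((n:ℝ)-1) * σ^2 →
      (∑ i, v1 i * (Real.sqrt n)⁻¹) ^ 2 ≥ 1 - (((n : ℝ) - 1) / n) * (σ ^ 2 / c ^ 2) := by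
    intro h
    have hsq : (∑ i, v1 i * (Real.sqrt n)⁻¹) = A * (Real.sqrt n)⁻¹ := by
      rw [hA, Finset.sum_mul]
    rw [hsq]
    have hsqrt : ((Real.sqrt n)⁻¹)^2 = ((n:ℝ))⁻¹ := by
      rw [← Real.sqrt_inv]
      exact Real.sq_sqrt (by positivity)
    have hexp : (A * (Real.sqrt n)⁻¹)^2 = A^2 / n := by
      rw [mul_pow, hsqrt]
      ring
    rw [hexp, ge_iff_le, ← sub_nonneg]
    have key : A^2/n - (1 - ((n:ℝ)-1)/n*(σ^2/c^2))
        = (((n:ℝ)-1)*σ^2 - c^2*((n:ℝ)-A^2)) / (n * c^2) := by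
      field_simp
      ring
    rw [key]
    have hden : (0:ℝ) < n * c^2 := by positivity
    exact div_nonneg (by linarith [h]) (le_of_lt hden)
  refine hgoal ?_
  -- case split on lam2 vs mu
  rcases le_or_gt mu lam2 with hcase | hcase
  ·
    have hkey : (n:ℝ) * c^2 ≤ ((n:ℝ)-1) * σ^2 := by
      refine lemC (n:ℝ) c (σ^2) lam1 lam2 (∑ k ∈ R, lam k) (∑ k ∈ R, lam k ^ 2)
        (by exact_mod_cast hn) hcpos hs2 hlam1mu (by rw [hmudef] at hcase; exact hcase)
        hsR hqR hsumR hsqR hcsR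
    have h0 : (0:ℝ) ≤ c^2 * A^2 := by positivity
    linarith [hkey, h0]
  · -- nondegenerate: top eigenvector is unique (up to sign)
    have hGzero : ∀ k, k ≠ k0 → G k = 0 := by
      intro k hk
      have hkmem : k ∈ univ.erase k0 := Finset.mem_erase.mpr ⟨hk, Finset.mem_univ k⟩
      have h1 : lam k ≤ lam2 := hk1max k hkmem
      have h2 : lam k < lam1 := lt_of_le_of_lt h1 (lt_of_lt_of_le hcase hlam1mu)
      have := hGeig k
      rcases mul_eq_zero.mp this with h | h
      · linarith
      · exact h
    have hGk0 : G k0 ^ 2 = 1 := by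
      have e : (∑ k, G k ^ 2) = G k0 ^ 2 :=
        Finset.sum_eq_single (f := fun k => G k ^ 2) k0
          (fun k _ hk => by rw [hGzero k hk]; ring)
          (fun h => absurd (Finset.mem_univ k0) h)
      rw [← e, hGsq]
    have hAeq : A = G k0 * B k0 := by
      rw [← hGB]
      exact Finset.sum_eq_single (f := fun k => G k * B k) k0
        (fun k _ hk => by rw [hGzero k hk]; ring)
        (fun h => absurd (Finset.mem_univ k0) h)
    have hA2 : A^2 = B k0 ^ 2 := by
      rw [hAeq, mul_pow, hGk0, one_mul]
    -- g-inequality: (lam1 - lam2) * (n - B k0²) ≤ n(lam1 - mu)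
    have hbeta : (∑ k ∈ univ.erase k0, B k ^ 2) = (n:ℝ) - B k0 ^ 2 := by
      have h0 := Finset.add_sum_erase univ (fun k => B k ^ 2) (Finset.mem_univ k0)
      rw [hBsq] at h0
      linarith
    have hgineq : (lam1 - lam2) * ((n:ℝ) - A^2) ≤ (n:ℝ) * (lam1 - mu) := by
      have h1 : (∑ k, (lam1 - lam k) * B k ^ 2) = (n:ℝ)*lam1 - (n:ℝ)*mu := by
        have e1 : (∑ k, (lam1 - lam k) * B k ^ 2)
            = lam1 * (∑ k, B k ^ 2) - ∑ k, lam k * B k ^ 2 := by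
          rw [Finset.mul_sum, ← Finset.sum_sub_distrib]
          exact Finset.sum_congr rfl fun k _ => by ring
        rw [e1, hBsq, hmu, hmudef]
        ring
      have h2 : (∑ k, (lam1 - lam k) * B k ^ 2)
          = ∑ k ∈ univ.erase k0, (lam1 - lam k) * B k ^ 2 := by
        rw [← Finset.add_sum_erase _ (fun k => (lam1 - lam k) * B k ^ 2)
          (Finset.mem_univ k0), hlamk0]
        ring
      have h3 : ∀ k ∈ univ.erase k0, (lam1 - lam2) * B k ^ 2 ≤ (lam1 - lam k) * B k ^ 2 := by
        intro k hk
        exact mul_le_mul_of_nonneg_right (by linarith [hk1max k hk]) (sq_nonneg _)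
      have h4 : (lam1 - lam2) * ((n:ℝ) - B k0 ^ 2) ≤ ∑ k ∈ univ.erase k0, (lam1 - lam k) * B k ^ 2 := by
        rw [← hbeta, Finset.mul_sum]
        exact Finset.sum_le_sum h3
      rw [hA2]
      linarith [h1, h2 ▸ h1, h4]
    -- certificate
    have hlam2pos : 0 ≤ lam2 := hnonneg k1
    have hcert : (n:ℝ)*c^2*(lam1 - mu) ≤ ((n:ℝ)-1)*σ^2*(lam1 - lam2) := by
      rcases eq_or_lt_of_le hn with h2 | h3
      · -- n = 2 : R is empty
        have hn2 : n = 2 := h2.symm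
        have hncast : (n:ℝ) = 2 := by rw [hn2]; norm_num
        have hR0 : R = ∅ := by
          apply Finset.card_eq_zero.mp
          rw [hR, Finset.card_erase_of_mem hk1mem,
            Finset.card_erase_of_mem (Finset.mem_univ k0)]
          simp only [Finset.card_univ, Fintype.card_fin]
          omega
        have hs0 : (∑ k ∈ R, lam k) = 0 := by rw [hR0]; simp
        have hq0 : (∑ k ∈ R, lam k ^ 2) = 0 := by rw [hR0]; simp
        have ha2 : 1 + c ≤ lam1 := by
          rw [hmudef, hncast] at hlam1mu
          linarith
        have key := lemA2 c (σ^2) lam1 lam2 hcpos hs2 ha2 hlam2pos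
          (by rw [hncast] at hsumR; linarith)
          (by rw [hncast] at hsqR; rw [hq0] at hsqR; linarith)
        rw [hmudef, hncast]
        linarith [key]
      · have hn3 : (3:ℝ) ≤ (n:ℝ) := by exact_mod_cast (by omega : 3 ≤ n)
        have := lemA (n:ℝ) c (σ^2) lam1 lam2 (∑ k ∈ R, lam k) (∑ k ∈ R, lam k ^ 2)
          hn3 hcpos hs2 (by rw [hmudef] at hlam1mu; exact hlam1mu) hlam2pos
          (by rw [hmudef] at hcase; linarith) hsR hqR hsumR hsqR hcsR
        rw [hmudef]
        linarith [this]
    -- combine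
    have hgap : 0 < lam1 - lam2 := by linarith
    have step : (lam1 - lam2) * (c^2 * ((n:ℝ) - A^2)) ≤ (lam1 - lam2) * (((n:ℝ)-1) * σ^2) := by
      calc (lam1 - lam2) * (c^2 * ((n:ℝ) - A^2))
          = c^2 * ((lam1 - lam2) * ((n:ℝ) - A^2)) := by ring
        _ ≤ c^2 * ((n:ℝ) * (lam1 - mu)) :=
            mul_le_mul_of_nonneg_left hgineq (sq_nonneg c)
        _ = (n:ℝ)*c^2*(lam1 - mu) := by ring
        _ ≤ ((n:ℝ)-1)*σ^2*(lam1 - lam2) := hcert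
        _ = (lam1 - lam2) * (((n:ℝ)-1) * σ^2) := by ring
    exact le_of_mul_le_mul_left step hgap
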